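/- Let s > 0 and let N ≥ 0 be an integer. Let (A_k, B_k) be a sequence with B_k ≥ 0, R_k = √(A_k² + B_k²) → ∞, and (A_k/R_k, B_k/R_k) → (cos ψ, sin ψ) for some ψ ∈ [0, 3π/4) such that 𝓕_N^s(ψ) ≠ 0. Then 𝓘_N^s(A_k,B_k) / D_k → 1, where D_k = (1/(πΓ(s+1))) ∫₀^{C(A_k,B_k)} cos(Nθ) (A_k + B_k cos θ)^s dθ and C(A,B) = arccos(−A/B) if −B < A < B and C(A,B) = π if A ≥ B. -/

import Mathlib

open MeasureTheory Set Filter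

/-- The Fermi integral of order `s`: `φ_s(x) = (1/Γ(s)) ∫₀^∞ t^{s-1}/(e^{t-x}+1) dt`. -/
noncomputable def fermi (s x : ℝ) : ℝ :=
  (1 / Real.Gamma s) * ∫ t in Set.Ioi (0 : ℝ), t ^ (s - 1) / (Real.exp (t - x) + 1)

/-- `𝓘_N^s(A,B) = (1/π) ∫₀^π cos(Nθ) φ_s(A + B cos θ) dθ`. -/
noncomputable def calI (N : ℕ) (s A B : ℝ) : ℝ :=
  (1 / Real.pi) * ∫ θ in (0 : ℝ)..Real.pi, Real.cos (N * θ) * fermi s (A + B * Real.cos θ)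

/-- `C(A,B) = arccos(-A/B)` if `-B < A < B`, and `C(A,B) = π` if `A ≥ B`. -/
noncomputable def Cab (A B : ℝ) : ℝ :=
  if B ≤ A then Real.pi else Real.arccos (-(A / B))

/-- `C(ψ) = π` for `0 ≤ ψ ≤ π/4`, `C(ψ) = arccos(-cot ψ)` for `π/4 < ψ < 3π/4`. -/
noncomputable def Cpsi (ψ : ℝ) : ℝ :=
  if ψ ≤ Real.pi / 4 then Real.pi else Real.arccos (-(Real.cos ψ / Real.sin ψ))

/-- `𝓕_N^s(ψ) = (1/(πΓ(s+1))) ∫₀^{C(ψ)} cos(Nθ)(cos ψ + sin ψ cos θ)^s dθ`. -/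
noncomputable def calF (N : ℕ) (s ψ : ℝ) : ℝ :=
  (1 / (Real.pi * Real.Gamma (s + 1))) *
    ∫ θ in (0 : ℝ)..Cpsi ψ, Real.cos (N * θ) * (Real.cos ψ + Real.sin ψ * Real.cos θ) ^ s





variable {s : ℝ}

lemma contOn_rpow (p : ℝ) : ContinuousOn (fun t : ℝ => t ^ p) (Ioi 0) := fun x hx =>
  (Real.continuousAt_rpow_const x p (Or.inl (ne_of_gt hx))).continuousWithinAt

lemma ff_contOn (s x : ℝ) :
    ContinuousOn (fun t : ℝ => t ^ (s - 1) / (Real.exp (t - x) + 1)) (Ioi 0) := by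
  apply (contOn_rpow (s-1)).div (((continuous_id.sub continuous_const).rexp.add continuous_const).continuousOn)
  intro t _; exact (add_pos (Real.exp_pos _) one_pos).ne'

lemma ff_nonneg {x t : ℝ} (ht : 0 < t) : 0 ≤ t ^ (s - 1) / (Real.exp (t - x) + 1) := by
  have := Real.rpow_nonneg ht.le (s-1)
  positivity

lemma ff_le_rpow {x t : ℝ} (ht : 0 < t) :
    t ^ (s - 1) / (Real.exp (t - x) + 1) ≤ t ^ (s - 1) := by
  have hnn := Real.rpow_nonneg ht.le (s-1)
  have h : t ^ (s-1) / (Real.exp (t - x) + 1) ≤ t ^ (s-1) / 1 := by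
    gcongr
    · linarith [Real.exp_pos (t - x)]
  simpa using h

lemma ff_le_exp {x t : ℝ} (ht : 0 < t) :
    t ^ (s - 1) / (Real.exp (t - x) + 1) ≤ t ^ (s - 1) * Real.exp (x - t) := by
  have h2 : (0:ℝ) < Real.exp (t - x) := Real.exp_pos _
  have hnn := Real.rpow_nonneg ht.le (s-1)
  have h : t ^ (s-1) / (Real.exp (t - x) + 1) ≤ t ^ (s-1) / Real.exp (t - x) := by
    gcongr
    · linarith
  refine h.trans (le_of_eq ?_)
  rw [div_eq_mul_inv, ← Real.exp_neg, neg_sub]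

lemma fermi_integrable (hs : 0 < s) (x : ℝ) :
    IntegrableOn (fun t : ℝ => t ^ (s - 1) / (Real.exp (t - x) + 1)) (Set.Ioi 0) := by
  apply Integrable.mono' (((Real.GammaIntegral_convergent hs).const_mul (Real.exp x)))
  · exact (ff_contOn s x).aestronglyMeasurable measurableSet_Ioi
  · rw [ae_restrict_iff' measurableSet_Ioi]
    filter_upwards with t ht
    rw [Real.norm_eq_abs, abs_of_nonneg (ff_nonneg ht)]
    calc t ^ (s - 1) / (Real.exp (t - x) + 1) ≤ t ^ (s - 1) * Real.exp (x - t) := ff_le_exp ht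
      _ = Real.exp x * (Real.exp (-t) * t ^ (s - 1)) := by rw [Real.exp_sub, Real.exp_neg]; ring

lemma fermi_nonneg (hs : 0 < s) (x : ℝ) : 0 ≤ fermi s x := by
  have h1 : (0:ℝ) < Real.Gamma s := Real.Gamma_pos_of_pos hs
  have h2 : 0 ≤ ∫ t in Set.Ioi (0:ℝ), t ^ (s - 1) / (Real.exp (t - x) + 1) :=
    setIntegral_nonneg measurableSet_Ioi fun t ht => ff_nonneg ht
  exact mul_nonneg (by positivity) h2

lemma fermi_le_exp (hs : 0 < s) (x : ℝ) : fermi s x ≤ Real.exp x := by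
  have h1 : (0:ℝ) < Real.Gamma s := Real.Gamma_pos_of_pos hs
  have h2 : ∫ t in Set.Ioi (0:ℝ), t ^ (s - 1) / (Real.exp (t - x) + 1)
      ≤ ∫ t in Set.Ioi (0:ℝ), Real.exp x * (Real.exp (-t) * t ^ (s - 1)) := by
    apply setIntegral_mono_on (fermi_integrable hs x)
      (((Real.GammaIntegral_convergent hs).const_mul (Real.exp x))) measurableSet_Ioi
    intro t ht
    calc t ^ (s - 1) / (Real.exp (t - x) + 1) ≤ t ^ (s - 1) * Real.exp (x - t) := ff_le_exp ht
      _ = Real.exp x * (Real.exp (-t) * t ^ (s - 1)) := by rw [Real.exp_sub, Real.exp_neg]; ring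
  have h3 : ∫ t in Set.Ioi (0:ℝ), Real.exp x * (Real.exp (-t) * t ^ (s - 1))
      = Real.exp x * Real.Gamma s := by
    rw [integral_const_mul, ← Real.Gamma_eq_integral hs]
  rw [fermi]
  rw [h3] at h2
  calc (1 / Real.Gamma s) * ∫ t in Set.Ioi (0:ℝ), t ^ (s - 1) / (Real.exp (t - x) + 1)
      ≤ (1 / Real.Gamma s) * (Real.exp x * Real.Gamma s) :=
        mul_le_mul_of_nonneg_left h2 (by positivity)
    _ = Real.exp x := by field_simp

lemma fermi_mono (hs : 0 < s) : Monotone (fermi s) := by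
  intro x y hxy
  have h1 : (0:ℝ) < Real.Gamma s := Real.Gamma_pos_of_pos hs
  apply mul_le_mul_of_nonneg_left _ (by positivity : (0:ℝ) ≤ 1 / Real.Gamma s)
  apply setIntegral_mono_on (fermi_integrable hs x) (fermi_integrable hs y) measurableSet_Ioi
  intro t ht
  have hnn := Real.rpow_nonneg (le_of_lt ht) (s-1)
  have hd : (0:ℝ) < Real.exp (t - y) + 1 := by positivity
  have hde : Real.exp (t - y) + 1 ≤ Real.exp (t - x) + 1 := by
    have := Real.exp_le_exp.2 (by linarith : t - y ≤ t - x)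
    linarith
  gcongr
section Chunk2
open MeasureTheory Set Filter
variable {s : ℝ}

lemma int_rpow_exp (hs : 0 < s) {r : ℝ} (hr : 0 < r) :
    IntegrableOn (fun t : ℝ => t ^ (s-1) * Real.exp (-(r*t))) (Ioi 0) := by
  have h := integrableOn_rpow_mul_exp_neg_mul_rpow (p := 1) (s := s-1) (b := r)
    (by linarith) one_pos hr
  apply h.congr_fun ?_ measurableSet_Ioi
  intro t ht
  simp only [Real.rpow_one, neg_mul]

lemma int_Ioc_rpow_integrable (hs : 0 < s) {c : ℝ} (hc : 0 ≤ c) :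
    IntegrableOn (fun t : ℝ => t ^ (s-1)) (Ioc 0 c) :=
  (intervalIntegrable_iff_integrableOn_Ioc_of_le hc).mp
    (intervalIntegral.intervalIntegrable_rpow' (by linarith))

lemma int_Ioc_rpow (hs : 0 < s) {c : ℝ} (hc : 0 ≤ c) :
    ∫ t in Ioc (0:ℝ) c, t ^ (s-1) = c ^ s / s := by
  rw [← intervalIntegral.integral_of_le hc, integral_rpow (Or.inl (by linarith))]
  have h1 : s - 1 + 1 = s := by ring
  rw [h1, Real.zero_rpow (by linarith : s ≠ 0)]
  ring

lemma fermi_growth (hs : 0 < s) (x : ℝ) :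
    fermi s x ≤ (2 * max x 0) ^ s / Real.Gamma (s+1) + 2 ^ s := by
  have hG : (0:ℝ) < Real.Gamma s := Real.Gamma_pos_of_pos hs
  set c := 2 * max x 0 with hcdef
  have hc0 : (0:ℝ) ≤ c := by positivity
  set f : ℝ → ℝ := fun t => t ^ (s - 1) / (Real.exp (t - x) + 1) with hfdef
  have hint := fermi_integrable hs x
  have hsplit : ∫ t in Ioi (0:ℝ), f t = (∫ t in Ioc (0:ℝ) c, f t) + ∫ t in Ioi c, f t := by
    rw [← Ioc_union_Ioi_eq_Ioi hc0]
    exact setIntegral_union (Ioc_disjoint_Ioi le_rfl) measurableSet_Ioi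
      (hint.mono_set Ioc_subset_Ioi_self) (hint.mono_set (Ioi_subset_Ioi hc0))
  have hb1 : ∫ t in Ioc (0:ℝ) c, f t ≤ c ^ s / s := by
    rw [← int_Ioc_rpow hs hc0]
    apply setIntegral_mono_on (hint.mono_set Ioc_subset_Ioi_self)
      (int_Ioc_rpow_integrable hs hc0) measurableSet_Ioc
    intro t ht
    exact ff_le_rpow ht.1
  have hb2 : ∫ t in Ioi c, f t ≤ 2 ^ s * Real.Gamma s := by
    have h1 : ∫ t in Ioi c, f t ≤ ∫ t in Ioi c, t ^ (s-1) * Real.exp (-(2⁻¹ * t)) := by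
      apply setIntegral_mono_on (hint.mono_set (Ioi_subset_Ioi hc0))
        ((int_rpow_exp hs (by norm_num : (0:ℝ) < 2⁻¹)).mono_set (Ioi_subset_Ioi hc0))
        measurableSet_Ioi
      intro t ht
      have ht0 : 0 < t := lt_of_le_of_lt hc0 ht
      refine (ff_le_exp ht0).trans ?_
      have hxt : x - t ≤ -(2⁻¹ * t) := by
        have : 2 * x ≤ c := by
          rw [hcdef]; nlinarith [le_max_left x (0:ℝ)]
        have := le_of_lt (mem_Ioi.mp ht)
        linarith
      exact mul_le_mul_of_nonneg_left (Real.exp_le_exp.2 hxt) (Real.rpow_nonneg ht0.le _)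
    have h2 : ∫ t in Ioi c, t ^ (s-1) * Real.exp (-(2⁻¹ * t))
        ≤ ∫ t in Ioi (0:ℝ), t ^ (s-1) * Real.exp (-(2⁻¹ * t)) := by
      apply setIntegral_mono_set (int_rpow_exp hs (by norm_num))
      · rw [EventuallyLE, ae_restrict_iff' measurableSet_Ioi]
        filter_upwards with t ht
        have := Real.rpow_nonneg (le_of_lt ht) (s-1)
        positivity
      · exact (Ioi_subset_Ioi hc0).eventuallyLE
    have h3 : ∫ t in Ioi (0:ℝ), t ^ (s-1) * Real.exp (-(2⁻¹ * t)) = 2 ^ s * Real.Gamma s := by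
      rw [Real.integral_rpow_mul_exp_neg_mul_Ioi hs (by norm_num : (0:ℝ) < 2⁻¹)]
      norm_num
    linarith
  have hGs1 : Real.Gamma (s+1) = s * Real.Gamma s := Real.Gamma_add_one (ne_of_gt hs)
  rw [fermi, hsplit]
  calc (1 / Real.Gamma s) * ((∫ t in Ioc (0:ℝ) c, f t) + ∫ t in Ioi c, f t)
      ≤ (1 / Real.Gamma s) * (c ^ s / s + 2 ^ s * Real.Gamma s) := by
        apply mul_le_mul_of_nonneg_left (by linarith) (by positivity)
    _ = c ^ s / Real.Gamma (s+1) + 2 ^ s := by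
        rw [hGs1]; field_simp
end Chunk2
section Chunk3
open MeasureTheory Set Filter
variable {s : ℝ}

lemma rpow_endpoint_bound (hs : 0 < s) {lo hi t : ℝ} (hlo : 0 < lo) (ht : lo ≤ t)
    (ht2 : t ≤ hi) : t ^ (s-1) ≤ lo ^ (s-1) + hi ^ (s-1) := by
  rcases le_total 1 s with h | h
  · have h1 : t^(s-1) ≤ hi^(s-1) := Real.rpow_le_rpow (by linarith) ht2 (by linarith)
    have h2 : 0 ≤ lo^(s-1) := Real.rpow_nonneg hlo.le _
    linarith
  · have h1 : t^(s-1) ≤ lo^(s-1) := Real.rpow_le_rpow_of_nonpos hlo ht (by linarith)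
    have h2 : 0 ≤ hi^(s-1) := Real.rpow_nonneg (le_trans hlo.le (ht.trans ht2)) _
    linarith

lemma exp_shift_integrable (hs : 0 < s) {x c : ℝ} (hc : 0 < c) :
    IntegrableOn (fun t : ℝ => t ^ (s-1) * Real.exp (x - t)) (Ioi c) := by
  have h : IntegrableOn (fun t : ℝ => Real.exp x * (Real.exp (-t) * t ^ (s-1))) (Ioi c) :=
    ((Real.GammaIntegral_convergent hs).mono_set
      (Ioi_subset_Ioi hc.le)).const_mul (Real.exp x)
  apply h.congr_fun ?_ measurableSet_Ioi
  intro t ht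
  show Real.exp x * (Real.exp (-t) * t ^ (s-1)) = t ^ (s-1) * Real.exp (x - t)
  rw [Real.exp_sub, Real.exp_neg]
  field_simp

lemma aesm_rpow_mul_exp {x : ℝ} {S : Set ℝ} (hS : MeasurableSet S) (hsub : S ⊆ Ioi 0) :
    AEStronglyMeasurable (fun t : ℝ => t ^ (s-1) * Real.exp (t - x)) (volume.restrict S) :=
  (((contOn_rpow (s-1)).mono hsub).mul
    (((continuous_id.sub continuous_const).rexp).continuousOn)).aestronglyMeasurable hS

lemma fermi_err (hs : 0 < s) (x : ℝ) (hx : 1 ≤ x) :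
    |Real.Gamma (s+1) * fermi s x - x ^ s| ≤
      Real.exp (-(2⁻¹*x)) * x ^ s + s * ((x/2) ^ (s-1) + x ^ (s-1))
      + s * (x ^ (s-1) + (2*x) ^ (s-1))
      + s * (Real.exp (-(2⁻¹*x)) * ∫ t in Ioi (0:ℝ), t ^ (s-1) * Real.exp (-(4⁻¹*t))) := by
  have hx0 : (0:ℝ) < x := by linarith
  have hGs : (0:ℝ) < Real.Gamma s := Real.Gamma_pos_of_pos hs
  have hG1 : Real.Gamma (s+1) = s * Real.Gamma s := Real.Gamma_add_one (ne_of_gt hs)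
  set f : ℝ → ℝ := fun t => t ^ (s - 1) / (Real.exp (t - x) + 1) with hfdef
  have hint := fermi_integrable hs x
  have step1 : Real.Gamma (s+1) * fermi s x = s * ∫ t in Ioi (0:ℝ), f t := by
    rw [fermi, hG1]
    field_simp
    try ring
  have step2 : x ^ s = s * ∫ t in Ioc (0:ℝ) x, t ^ (s-1) := by
    rw [int_Ioc_rpow hs hx0.le]
    field_simp
  have hsplit : ∫ t in Ioi (0:ℝ), f t = (∫ t in Ioc (0:ℝ) x, f t) + ∫ t in Ioi x, f t := by
    rw [← Ioc_union_Ioi_eq_Ioi hx0.le]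
    exact setIntegral_union (Ioc_disjoint_Ioi le_rfl) measurableSet_Ioi
      (hint.mono_set Ioc_subset_Ioi_self) (hint.mono_set (Ioi_subset_Ioi hx0.le))
  set D1 : ℝ := (∫ t in Ioc (0:ℝ) x, f t) - ∫ t in Ioc (0:ℝ) x, t ^ (s-1) with hD1def
  set D2 : ℝ := ∫ t in Ioi x, f t with hD2def
  have hE : Real.Gamma (s+1) * fermi s x - x ^ s = s * (D1 + D2) := by
    rw [step1, step2, hsplit]; ring
  -- |D1| bound
  have hintbd : IntegrableOn (fun t : ℝ => t ^ (s-1) * Real.exp (t - x)) (Ioc 0 x) := by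
    apply Integrable.mono' (int_Ioc_rpow_integrable hs hx0.le)
      (aesm_rpow_mul_exp measurableSet_Ioc Ioc_subset_Ioi_self)
    rw [ae_restrict_iff' measurableSet_Ioc]
    filter_upwards with t ht
    have h1 : 0 ≤ t ^ (s-1) := Real.rpow_nonneg ht.1.le _
    have h2 : Real.exp (t - x) ≤ 1 := by
      rw [← Real.exp_zero]
      exact Real.exp_le_exp.2 (by linarith [ht.2])
    rw [Real.norm_eq_abs, abs_of_nonneg (by positivity)]
    nlinarith [Real.exp_pos (t - x)]
  have hD1 : |D1| ≤ ∫ t in Ioc (0:ℝ) x, t ^ (s-1) * Real.exp (t - x) := by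
    rw [hD1def, ← integral_sub (hint.mono_set Ioc_subset_Ioi_self)
      (int_Ioc_rpow_integrable hs hx0.le)]
    have habs0 := norm_integral_le_integral_norm (μ := volume.restrict (Ioc (0:ℝ) x))
      (f := fun t => f t - t ^ (s-1))
    simp only [Real.norm_eq_abs] at habs0
    refine habs0.trans ?_
    apply setIntegral_mono_on
      ((hint.mono_set Ioc_subset_Ioi_self).sub (int_Ioc_rpow_integrable hs hx0.le)).abs
      hintbd measurableSet_Ioc
    intro t ht
    have hE1 : (0:ℝ) < Real.exp (t - x) := Real.exp_pos _
    have h1 : 0 ≤ t ^ (s-1) := Real.rpow_nonneg ht.1.le _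
    have hfle : f t ≤ t ^ (s-1) := ff_le_rpow ht.1
    have hfnn : 0 ≤ f t := ff_nonneg ht.1
    rw [abs_of_nonpos (by simpa using sub_nonpos.2 hfle)]
    have expand : t ^ (s-1) - t ^ (s-1) / (Real.exp (t-x) + 1)
        = t ^ (s-1) * (Real.exp (t-x) / (Real.exp (t-x) + 1)) := by
      field_simp
      ring
    have key : t ^ (s-1) - f t ≤ t ^ (s-1) * Real.exp (t - x) := by
      rw [hfdef]
      simp only []
      rw [expand]
      apply mul_le_mul_of_nonneg_left _ h1
      rw [div_le_iff₀ (by positivity)]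
      nlinarith
    simpa using key
  -- T1 bound
  have hT1 : ∫ t in Ioc (0:ℝ) x, t ^ (s-1) * Real.exp (t - x)
      ≤ Real.exp (-(2⁻¹*x)) * x ^ s / s + ((x/2) ^ (s-1) + x ^ (s-1)) := by
    have hhalf : (0:ℝ) < x/2 := by linarith
    have hsplit2 : ∫ t in Ioc (0:ℝ) x, t ^ (s-1) * Real.exp (t - x)
        = (∫ t in Ioc (0:ℝ) (x/2), t ^ (s-1) * Real.exp (t - x))
          + ∫ t in Ioc (x/2) x, t ^ (s-1) * Real.exp (t - x) := by
      rw [← Ioc_union_Ioc_eq_Ioc hhalf.le (by linarith : x/2 ≤ x)]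
      exact setIntegral_union (Ioc_disjoint_Ioc.mpr ((min_le_left _ _).trans (le_max_right _ _))) measurableSet_Ioc
        (hintbd.mono_set (Ioc_subset_Ioc_right (by linarith)))
        (hintbd.mono_set (Ioc_subset_Ioc_left hhalf.le))
    have hA : ∫ t in Ioc (0:ℝ) (x/2), t ^ (s-1) * Real.exp (t - x)
        ≤ Real.exp (-(2⁻¹*x)) * x ^ s / s := by
      have h1 : ∫ t in Ioc (0:ℝ) (x/2), t ^ (s-1) * Real.exp (t - x)
          ≤ ∫ t in Ioc (0:ℝ) (x/2), t ^ (s-1) * Real.exp (-(2⁻¹*x)) := by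
        apply setIntegral_mono_on (hintbd.mono_set (Ioc_subset_Ioc_right (by linarith)))
          ((int_Ioc_rpow_integrable hs hhalf.le).mul_const _) measurableSet_Ioc
        intro t ht
        exact mul_le_mul_of_nonneg_left
          (Real.exp_le_exp.2 (by linarith [ht.2])) (Real.rpow_nonneg ht.1.le _)
      have h2 : ∫ t in Ioc (0:ℝ) (x/2), t ^ (s-1) * Real.exp (-(2⁻¹*x))
          = (x/2) ^ s / s * Real.exp (-(2⁻¹*x)) := by
        rw [integral_mul_const, int_Ioc_rpow hs hhalf.le]
      have h3 : (x/2) ^ s ≤ x ^ s := Real.rpow_le_rpow hhalf.le (by linarith) hs.le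
      have h4 : (0:ℝ) < Real.exp (-(2⁻¹*x)) := Real.exp_pos _
      calc ∫ t in Ioc (0:ℝ) (x/2), t ^ (s-1) * Real.exp (t - x)
          ≤ (x/2) ^ s / s * Real.exp (-(2⁻¹*x)) := by rw [← h2]; exact h1
        _ ≤ x ^ s / s * Real.exp (-(2⁻¹*x)) := by gcongr
        _ = Real.exp (-(2⁻¹*x)) * x ^ s / s := by ring
    have hexpint : ∫ t in Ioc (x/2) x, Real.exp (t - x) ≤ 1 := by
      rw [← intervalIntegral.integral_of_le (by linarith : x/2 ≤ x)]
      rw [intervalIntegral.integral_comp_sub_right Real.exp x, integral_exp]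
      have : Real.exp (x - x) = 1 := by simp
      rw [this]
      linarith [Real.exp_pos (x/2 - x)]
    have hm : (0:ℝ) ≤ (x/2) ^ (s-1) + x ^ (s-1) := by
      have := Real.rpow_nonneg hhalf.le (s-1)
      have := Real.rpow_nonneg hx0.le (s-1)
      linarith
    have hB : ∫ t in Ioc (x/2) x, t ^ (s-1) * Real.exp (t - x)
        ≤ (x/2) ^ (s-1) + x ^ (s-1) := by
      have h1 : ∫ t in Ioc (x/2) x, t ^ (s-1) * Real.exp (t - x)
          ≤ ∫ t in Ioc (x/2) x, ((x/2) ^ (s-1) + x ^ (s-1)) * Real.exp (t - x) := by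
        apply setIntegral_mono_on (hintbd.mono_set (Ioc_subset_Ioc_left hhalf.le))
          (((continuous_const.mul
            ((continuous_id.sub continuous_const).rexp)).integrableOn_Ioc)) measurableSet_Ioc
        intro t ht
        exact mul_le_mul_of_nonneg_right
          (rpow_endpoint_bound hs hhalf ht.1.le ht.2) (Real.exp_pos _).le
      have h2 : ∫ t in Ioc (x/2) x, ((x/2) ^ (s-1) + x ^ (s-1)) * Real.exp (t - x)
          = ((x/2) ^ (s-1) + x ^ (s-1)) * ∫ t in Ioc (x/2) x, Real.exp (t - x) := by
        rw [integral_const_mul]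
      calc ∫ t in Ioc (x/2) x, t ^ (s-1) * Real.exp (t - x)
          ≤ ((x/2) ^ (s-1) + x ^ (s-1)) * ∫ t in Ioc (x/2) x, Real.exp (t - x) := by
            rw [← h2]; exact h1
        _ ≤ ((x/2) ^ (s-1) + x ^ (s-1)) * 1 := mul_le_mul_of_nonneg_left hexpint hm
        _ = (x/2) ^ (s-1) + x ^ (s-1) := by ring
    linarith [hsplit2, hA, hB]
  -- D2 bound
  have hD2nn : 0 ≤ D2 := setIntegral_nonneg measurableSet_Ioi
    (fun t ht => ff_nonneg (lt_trans hx0 ht))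
  have htail : IntegrableOn (fun t : ℝ => t ^ (s-1) * Real.exp (x - t)) (Ioi x) :=
    exp_shift_integrable hs hx0
  have hD2a : D2 ≤ ∫ t in Ioi x, t ^ (s-1) * Real.exp (x - t) := by
    apply setIntegral_mono_on (hint.mono_set (Ioi_subset_Ioi hx0.le)) htail measurableSet_Ioi
    intro t ht
    exact ff_le_exp (lt_trans hx0 ht)
  have hD2b : ∫ t in Ioi x, t ^ (s-1) * Real.exp (x - t)
      ≤ (x ^ (s-1) + (2*x) ^ (s-1))
        + Real.exp (-(2⁻¹*x)) * ∫ t in Ioi (0:ℝ), t ^ (s-1) * Real.exp (-(4⁻¹*t)) := by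
    have h2x : x < 2*x := by linarith
    have hsplit3 : ∫ t in Ioi x, t ^ (s-1) * Real.exp (x - t)
        = (∫ t in Ioc x (2*x), t ^ (s-1) * Real.exp (x - t))
          + ∫ t in Ioi (2*x), t ^ (s-1) * Real.exp (x - t) := by
      rw [← Ioc_union_Ioi_eq_Ioi h2x.le]
      exact setIntegral_union (Ioc_disjoint_Ioi le_rfl) measurableSet_Ioi
        (htail.mono_set Ioc_subset_Ioi_self) (htail.mono_set (Ioi_subset_Ioi h2x.le))
    have hexpint2 : ∫ t in Ioc x (2*x), Real.exp (x - t) ≤ 1 := by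
      rw [← intervalIntegral.integral_of_le h2x.le]
      rw [intervalIntegral.integral_comp_sub_left Real.exp x, integral_exp]
      have : Real.exp (x - x) = 1 := by simp
      rw [this]
      linarith [Real.exp_pos (x - 2*x)]
    have hm2 : (0:ℝ) ≤ x ^ (s-1) + (2*x) ^ (s-1) := by
      have := Real.rpow_nonneg hx0.le (s-1)
      have : (0:ℝ) ≤ (2*x) ^ (s-1) := Real.rpow_nonneg (by linarith) (s-1)
      linarith [Real.rpow_nonneg hx0.le (s-1)]
    have hC : ∫ t in Ioc x (2*x), t ^ (s-1) * Real.exp (x - t)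
        ≤ x ^ (s-1) + (2*x) ^ (s-1) := by
      have h1 : ∫ t in Ioc x (2*x), t ^ (s-1) * Real.exp (x - t)
          ≤ ∫ t in Ioc x (2*x), (x ^ (s-1) + (2*x) ^ (s-1)) * Real.exp (x - t) := by
        apply setIntegral_mono_on (htail.mono_set Ioc_subset_Ioi_self)
          ((continuous_const.mul
            ((continuous_const.sub continuous_id).rexp)).integrableOn_Ioc) measurableSet_Ioc
        intro t ht
        exact mul_le_mul_of_nonneg_right
          (rpow_endpoint_bound hs hx0 ht.1.le ht.2) (Real.exp_pos _).le
      rw [integral_const_mul] at h1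
      calc ∫ t in Ioc x (2*x), t ^ (s-1) * Real.exp (x - t)
          ≤ (x ^ (s-1) + (2*x) ^ (s-1)) * ∫ t in Ioc x (2*x), Real.exp (x - t) := h1
        _ ≤ (x ^ (s-1) + (2*x) ^ (s-1)) * 1 := mul_le_mul_of_nonneg_left hexpint2 hm2
        _ = x ^ (s-1) + (2*x) ^ (s-1) := by ring
    have hD : ∫ t in Ioi (2*x), t ^ (s-1) * Real.exp (x - t)
        ≤ Real.exp (-(2⁻¹*x)) * ∫ t in Ioi (0:ℝ), t ^ (s-1) * Real.exp (-(4⁻¹*t)) := by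
      have h1 : ∫ t in Ioi (2*x), t ^ (s-1) * Real.exp (x - t)
          ≤ ∫ t in Ioi (2*x), Real.exp (-(2⁻¹*x)) * (t ^ (s-1) * Real.exp (-(4⁻¹*t))) := by
        apply setIntegral_mono_on (htail.mono_set (Ioi_subset_Ioi h2x.le))
          (((int_rpow_exp hs (by norm_num : (0:ℝ) < 4⁻¹)).mono_set
            (Ioi_subset_Ioi (by linarith))).const_mul _) measurableSet_Ioi
        intro t ht
        have ht' : 2*x < t := ht
        have hexp : Real.exp (x - t) ≤ Real.exp (-(2⁻¹*x)) * Real.exp (-(4⁻¹*t)) := by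
          rw [← Real.exp_add]
          exact Real.exp_le_exp.2 (by linarith)
        have hr : 0 ≤ t ^ (s-1) := Real.rpow_nonneg (by linarith) _
        calc t ^ (s-1) * Real.exp (x - t)
            ≤ t ^ (s-1) * (Real.exp (-(2⁻¹*x)) * Real.exp (-(4⁻¹*t))) :=
              mul_le_mul_of_nonneg_left hexp hr
          _ = Real.exp (-(2⁻¹*x)) * (t ^ (s-1) * Real.exp (-(4⁻¹*t))) := by ring
      rw [integral_const_mul] at h1
      refine h1.trans ?_
      apply mul_le_mul_of_nonneg_left _ (Real.exp_pos _).le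
      apply setIntegral_mono_set (int_rpow_exp hs (by norm_num : (0:ℝ) < 4⁻¹))
      · rw [EventuallyLE, ae_restrict_iff' measurableSet_Ioi]
        filter_upwards with t ht
        have := Real.rpow_nonneg (le_of_lt ht) (s-1)
        positivity
      · exact (Ioi_subset_Ioi (by linarith : (0:ℝ) ≤ 2*x)).eventuallyLE
    linarith [hsplit3, hC, hD]
  -- assemble
  have habs : |Real.Gamma (s+1) * fermi s x - x ^ s| ≤ s * (|D1| + D2) := by
    rw [hE, abs_mul, abs_of_pos hs]
    apply mul_le_mul_of_nonneg_left _ hs.le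
    calc |D1 + D2| ≤ |D1| + |D2| := abs_add_le _ _
      _ = |D1| + D2 := by rw [abs_of_nonneg hD2nn]
  have hsum : |D1| + D2
      ≤ (Real.exp (-(2⁻¹*x)) * x ^ s / s + ((x/2) ^ (s-1) + x ^ (s-1)))
        + ((x ^ (s-1) + (2*x) ^ (s-1))
          + Real.exp (-(2⁻¹*x)) * ∫ t in Ioi (0:ℝ), t ^ (s-1) * Real.exp (-(4⁻¹*t))) := by
    have := hD1.trans hT1
    have := hD2a.trans hD2b
    linarith
  calc |Real.Gamma (s+1) * fermi s x - x ^ s| ≤ s * (|D1| + D2) := habs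
    _ ≤ s * ((Real.exp (-(2⁻¹*x)) * x ^ s / s + ((x/2) ^ (s-1) + x ^ (s-1)))
        + ((x ^ (s-1) + (2*x) ^ (s-1))
          + Real.exp (-(2⁻¹*x)) * ∫ t in Ioi (0:ℝ), t ^ (s-1) * Real.exp (-(4⁻¹*t)))) :=
      mul_le_mul_of_nonneg_left hsum hs.le
    _ = Real.exp (-(2⁻¹*x)) * x ^ s + s * ((x/2) ^ (s-1) + x ^ (s-1))
      + s * (x ^ (s-1) + (2*x) ^ (s-1))
      + s * (Real.exp (-(2⁻¹*x)) * ∫ t in Ioi (0:ℝ), t ^ (s-1) * Real.exp (-(4⁻¹*t))) := by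
        field_simp
        ring
end Chunk3
section Chunk4
open MeasureTheory Set Filter
variable {s : ℝ}

lemma fermi_ratio (hs : 0 < s) :
    Tendsto (fun x => Real.Gamma (s+1) * fermi s x / x ^ s) atTop (nhds 1) := by
  set C4 : ℝ := ∫ t in Ioi (0:ℝ), t ^ (s-1) * Real.exp (-(4⁻¹*t)) with hC4def
  have hC4 : 0 ≤ C4 := setIntegral_nonneg measurableSet_Ioi (fun t ht => by
    have := Real.rpow_nonneg (le_of_lt ht) (s-1)
    positivity)
  set g : ℝ → ℝ := fun x => Real.exp (-(2⁻¹*x)) + (s*((2⁻¹:ℝ)^(s-1) + 1) + s*(1+2^(s-1))) * x⁻¹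
      + (s*C4) * Real.exp (-(2⁻¹*x)) with hgdef
  have hg0 : Tendsto g atTop (nhds 0) := by
    have hneg : Tendsto (fun x : ℝ => -(2⁻¹*x)) atTop atBot := by
      apply tendsto_neg_atTop_atBot.comp
      exact Tendsto.const_mul_atTop (by norm_num) tendsto_id
    have t1 : Tendsto (fun x : ℝ => Real.exp (-(2⁻¹*x))) atTop (nhds 0) :=
      Real.tendsto_exp_atBot.comp hneg
    have t2 : Tendsto (fun x : ℝ => (s*((2⁻¹:ℝ)^(s-1) + 1) + s*(1+2^(s-1))) * x⁻¹) atTop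
        (nhds 0) := by
      have := tendsto_inv_atTop_zero (𝕜 := ℝ)
      have h := this.const_mul (s*((2⁻¹:ℝ)^(s-1) + 1) + s*(1+2^(s-1)))
      simpa using h
    have t3 : Tendsto (fun x : ℝ => (s*C4) * Real.exp (-(2⁻¹*x))) atTop (nhds 0) := by
      have h := t1.const_mul (s*C4)
      simpa using h
    have := (t1.add t2).add t3
    simpa using this
  have key : Tendsto (fun x => (Real.Gamma (s+1) * fermi s x - x ^ s) / x ^ s)
      atTop (nhds 0) := by
    apply squeeze_zero_norm' ?_ hg0
    filter_upwards [eventually_ge_atTop (1:ℝ)] with x hx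
    have hx0 : (0:ℝ) < x := by linarith
    have hxs : (0:ℝ) < x ^ s := Real.rpow_pos_of_pos hx0 s
    have hxs1 : (1:ℝ) ≤ x ^ s := Real.one_le_rpow hx hs.le
    rw [Real.norm_eq_abs, abs_div, abs_of_pos hxs, div_le_iff₀ hxs]
    have herr := fermi_err hs x hx
    have e1 : (x/2)^(s-1) = x^(s-1) * (2⁻¹:ℝ)^(s-1) := by
      rw [show x/2 = x * (2⁻¹:ℝ) by ring, Real.mul_rpow hx0.le (by norm_num)]
    have e2 : (2*x)^(s-1) = 2^(s-1) * x^(s-1) := Real.mul_rpow (by norm_num) hx0.le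
    have e3 : x^(s-1) = x^s * x⁻¹ := by
      rw [show s-1 = s + (-1) by ring, Real.rpow_add hx0, Real.rpow_neg_one]
    have hexp : (0:ℝ) ≤ Real.exp (-(2⁻¹*x)) := (Real.exp_pos _).le
    have hxinv : (0:ℝ) < x⁻¹ := by positivity
    have hprod : 0 ≤ (s*C4*Real.exp (-(2⁻¹*x))) * (x^s - 1) := by
      apply mul_nonneg (by positivity) (by linarith)
    have hxx : x⁻¹ * x ^ s = x ^ (s-1) := by
      rw [e3]; ring
    rw [hgdef]
    have expandg : (Real.exp (-(2⁻¹*x)) + (s*((2⁻¹:ℝ)^(s-1) + 1) + s*(1+2^(s-1))) * x⁻¹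
        + (s*C4) * Real.exp (-(2⁻¹*x))) * x ^ s
        = Real.exp (-(2⁻¹*x)) * x ^ s
          + s * ((x/2)^(s-1) + x^(s-1)) + s * (x^(s-1) + (2*x)^(s-1))
          + (s*C4) * Real.exp (-(2⁻¹*x)) * x ^ s := by
      rw [e1, e2, e3]
      ring
    rw [expandg]
    have last : s * (Real.exp (-(2⁻¹*x)) * C4) ≤ (s*C4) * Real.exp (-(2⁻¹*x)) * x ^ s := by
      nlinarith
    calc |Real.Gamma (s+1) * fermi s x - x ^ s|
        ≤ Real.exp (-(2⁻¹*x)) * x ^ s + s * ((x/2) ^ (s-1) + x ^ (s-1))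
          + s * (x ^ (s-1) + (2*x) ^ (s-1)) + s * (Real.exp (-(2⁻¹*x)) * C4) := herr
      _ ≤ Real.exp (-(2⁻¹*x)) * x ^ s + s * ((x/2) ^ (s-1) + x ^ (s-1))
          + s * (x ^ (s-1) + (2*x) ^ (s-1)) + (s*C4) * Real.exp (-(2⁻¹*x)) * x ^ s := by
        linarith
  have final := key.const_add (1:ℝ)
  rw [add_zero] at final
  apply final.congr'
  filter_upwards [eventually_ge_atTop (1:ℝ)] with x hx
  have hx0 : (0:ℝ) < x := by linarith
  have hxs : (0:ℝ) < x ^ s := Real.rpow_pos_of_pos hx0 s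
  field_simp
  ring
end Chunk4
section Chunk5
open MeasureTheory Set Filter
variable {s : ℝ}



lemma Cab_nonneg (A B : ℝ) : 0 ≤ Cab A B := by
  rw [Cab]; split
  · exact Real.pi_pos.le
  · exact Real.arccos_nonneg _

lemma Cab_le_pi (A B : ℝ) : Cab A B ≤ Real.pi := by
  rw [Cab]; split
  · exact le_rfl
  · exact Real.arccos_le_pi _

lemma cos_sub_sin (ψ : ℝ) :
    Real.cos ψ - Real.sin ψ = Real.sqrt 2 * Real.cos (ψ + Real.pi/4) := by
  rw [Real.cos_add, Real.cos_pi_div_four, Real.sin_pi_div_four]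
  have h2 : Real.sqrt 2 * (Real.sqrt 2 / 2) = 1 := by
    rw [mul_div_assoc']
    rw [Real.mul_self_sqrt (by norm_num : (0:ℝ) ≤ 2)]
    norm_num
  calc Real.cos ψ - Real.sin ψ
      = (Real.sqrt 2 * (Real.sqrt 2/2)) * Real.cos ψ
        - (Real.sqrt 2 * (Real.sqrt 2/2)) * Real.sin ψ := by rw [h2]; ring
    _ = Real.sqrt 2 * (Real.cos ψ * (Real.sqrt 2/2) - Real.sin ψ * (Real.sqrt 2/2)) := by ring

lemma cos_add_sin (ψ : ℝ) :
    Real.cos ψ + Real.sin ψ = Real.sqrt 2 * Real.sin (ψ + Real.pi/4) := by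
  rw [Real.sin_add, Real.cos_pi_div_four, Real.sin_pi_div_four]
  have h2 : Real.sqrt 2 * (Real.sqrt 2 / 2) = 1 := by
    rw [mul_div_assoc']
    rw [Real.mul_self_sqrt (by norm_num : (0:ℝ) ≤ 2)]
    norm_num
  calc Real.cos ψ + Real.sin ψ
      = (Real.sqrt 2 * (Real.sqrt 2/2)) * Real.sin ψ
        + (Real.sqrt 2 * (Real.sqrt 2/2)) * Real.cos ψ := by rw [h2]; ring
    _ = Real.sqrt 2 * (Real.sin ψ * (Real.sqrt 2/2) + Real.cos ψ * (Real.sqrt 2/2)) := by ring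

lemma cos_add_sin_pos {ψ : ℝ} (h0 : 0 ≤ ψ) (h1 : ψ < 3*Real.pi/4) :
    0 < Real.cos ψ + Real.sin ψ := by
  have hπ := Real.pi_pos
  rw [cos_add_sin]
  have hsin : 0 < Real.sin (ψ + Real.pi/4) :=
    Real.sin_pos_of_pos_of_lt_pi (by linarith) (by linarith)
  have h2 : 0 < Real.sqrt 2 := Real.sqrt_pos.mpr (by norm_num)
  positivity

lemma Cpsi_eq_Cab {ψ : ℝ} (h0 : 0 ≤ ψ) (h1 : ψ < 3*Real.pi/4) :
    Cpsi ψ = Cab (Real.cos ψ) (Real.sin ψ) := by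
  have hπ := Real.pi_pos
  have hkey := cos_sub_sin ψ
  have hs2 : (0:ℝ) < Real.sqrt 2 := Real.sqrt_pos.mpr (by norm_num)
  rcases le_or_gt ψ (Real.pi/4) with h | h
  · have hc : 0 ≤ Real.cos (ψ + Real.pi/4) :=
      Real.cos_nonneg_of_mem_Icc ⟨by linarith, by linarith⟩
    have hle : Real.sin ψ ≤ Real.cos ψ := by nlinarith
    rw [Cpsi, Cab, if_pos h, if_pos hle]
  · have hc : Real.cos (ψ + Real.pi/4) < 0 :=
      Real.cos_neg_of_pi_div_two_lt_of_lt (by linarith) (by linarith)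
    have hlt : Real.cos ψ < Real.sin ψ := by nlinarith
    rw [Cpsi, Cab, if_neg (not_le.mpr h), if_neg (not_le.mpr hlt)]

lemma nonneg_on_CabIcc {a b θ : ℝ} (hb : 0 ≤ b) (hab : -b < a) (hθ0 : 0 ≤ θ)
    (hθ : θ ≤ Cab a b) : 0 ≤ a + b * Real.cos θ := by
  rcases le_or_gt b a with hba | hba
  · have h1 : -1 ≤ Real.cos θ := Real.neg_one_le_cos θ
    nlinarith
  · have hb0 : 0 < b := by linarith
    rw [Cab, if_neg (not_le.mpr hba)] at hθ
    have hz1 : -(a/b) ≤ 1 := by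
      rw [← neg_div]
      exact (div_le_one hb0).mpr (by linarith)
    have hz2 : (-1:ℝ) ≤ -(a/b) := by
      rw [← neg_div]
      rw [le_div_iff₀ hb0]
      linarith
    have hcc := Real.cos_le_cos_of_nonneg_of_le_pi hθ0 (Real.arccos_le_pi _) hθ
    rw [Real.cos_arccos hz2 hz1] at hcc
    have h2 : b * (-(a/b)) = -a := by field_simp
    nlinarith [mul_le_mul_of_nonneg_left hcc hb0.le]

lemma max_rpow_cont (hs : 0 < s) (N : ℕ) (a b : ℝ) :
    Continuous (fun θ : ℝ => Real.cos (N*θ) * (max (a + b*Real.cos θ) 0) ^ s) := by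
  apply Continuous.mul
  · exact Real.continuous_cos.comp (continuous_const.mul continuous_id)
  · rw [continuous_iff_continuousAt]
    intro θ
    exact ContinuousAt.rpow_const ((continuous_const.add
      (continuous_const.mul Real.continuous_cos)).max continuous_const).continuousAt
      (Or.inr hs.le)

lemma integral_Cab (hs : 0 < s) (N : ℕ) {a b : ℝ} (hb : 0 ≤ b) (hab : -b < a) :
    (∫ θ in (0:ℝ)..Cab a b, Real.cos (N*θ) * (a + b*Real.cos θ)^s)
    = ∫ θ in (0:ℝ)..Real.pi, Real.cos (N*θ) * (max (a + b*Real.cos θ) 0)^s := by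
  have hCnn := Cab_nonneg a b
  have hCpi := Cab_le_pi a b
  have hcont := max_rpow_cont hs N a b
  have hfirst : (∫ θ in (0:ℝ)..Cab a b, Real.cos (N*θ) * (a + b*Real.cos θ)^s)
      = ∫ θ in (0:ℝ)..Cab a b, Real.cos (N*θ) * (max (a + b*Real.cos θ) 0)^s := by
    apply intervalIntegral.integral_congr
    intro θ hθ
    rw [Set.uIcc_of_le hCnn] at hθ
    show Real.cos (N*θ) * (a + b*Real.cos θ)^s
        = Real.cos (N*θ) * (max (a + b*Real.cos θ) 0)^s
    rw [max_eq_left (nonneg_on_CabIcc hb hab hθ.1 hθ.2)]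
  have hzero : (∫ θ in Cab a b..Real.pi, Real.cos (N*θ) * (max (a + b*Real.cos θ) 0)^s)
      = 0 := by
    rcases le_or_gt b a with hba | hba
    · rw [Cab, if_pos hba, intervalIntegral.integral_same]
    · have hb0 : 0 < b := by linarith
      have hCeq : Cab a b = Real.arccos (-(a/b)) := by rw [Cab, if_neg (not_le.mpr hba)]
      have h0 : EqOn (fun θ : ℝ => Real.cos (N*θ) * (max (a + b*Real.cos θ) 0)^s)
          (fun _ => (0:ℝ)) (Set.uIcc (Cab a b) Real.pi) := by
        intro θ hθ
        rw [Set.uIcc_of_le hCpi] at hθ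
        have hz1 : -(a/b) ≤ 1 := by
          rw [← neg_div]; exact (div_le_one hb0).mpr (by linarith)
        have hz2 : (-1:ℝ) ≤ -(a/b) := by
          rw [← neg_div, le_div_iff₀ hb0]; linarith
        have hcc := Real.cos_le_cos_of_nonneg_of_le_pi (hCnn.trans hθ.1) hθ.2 le_rfl
        have hcc2 : Real.cos θ ≤ -(a/b) := by
          have := Real.cos_le_cos_of_nonneg_of_le_pi hCnn hθ.2 hθ.1
          rw [hCeq] at this
          rw [Real.cos_arccos hz2 hz1] at this
          exact this
        have hle : a + b*Real.cos θ ≤ 0 := by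
          have h2 : b * (-(a/b)) = -a := by field_simp
          nlinarith [mul_le_mul_of_nonneg_left hcc2 hb0.le]
        show Real.cos (N*θ) * (max (a + b*Real.cos θ) 0)^s = 0
        rw [max_eq_right hle, Real.zero_rpow (ne_of_gt hs), mul_zero]
      rw [intervalIntegral.integral_congr h0]
      simp
  have hsplit := intervalIntegral.integral_add_adjacent_intervals
    (hcont.intervalIntegrable (μ := volume) 0 (Cab a b))
    (hcont.intervalIntegrable (μ := volume) (Cab a b) Real.pi)
  rw [hfirst]
  linarith [hsplit, hzero]

lemma Cab_scale {R a b : ℝ} (hR : 0 < R) : Cab (R*a) (R*b) = Cab a b := by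
  rcases le_or_gt b a with h | h
  · rw [Cab, if_pos ((mul_le_mul_iff_right₀ hR).mpr h), Cab, if_pos h]
  · rw [Cab, if_neg (not_le.mpr ((mul_lt_mul_iff_right₀ hR).mpr h)), Cab, if_neg (not_le.mpr h),
      mul_div_mul_left a b (ne_of_gt hR)]

lemma integral_D_scale (hs : 0 < s) (N : ℕ) {R a b : ℝ} (hR : 0 < R) (hb : 0 ≤ b)
    (hab : -b < a) :
    (∫ θ in (0:ℝ)..Cab (R*a) (R*b), Real.cos (N*θ) * ((R*a) + (R*b)*Real.cos θ)^s)
    = R^s * ∫ θ in (0:ℝ)..Real.pi, Real.cos (N*θ) * (max (a + b*Real.cos θ) 0)^s := by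
  rw [Cab_scale hR, ← integral_Cab hs N hb hab, ← intervalIntegral.integral_const_mul]
  apply intervalIntegral.integral_congr
  intro θ hθ
  rw [Set.uIcc_of_le (Cab_nonneg a b)] at hθ
  have h0 : 0 ≤ a + b * Real.cos θ := nonneg_on_CabIcc hb hab hθ.1 hθ.2
  show Real.cos (N*θ) * (R*a + R*b*Real.cos θ)^s
      = R^s * (Real.cos (N*θ) * (a + b*Real.cos θ)^s)
  rw [show R*a + R*b*Real.cos θ = R * (a + b*Real.cos θ) by ring, Real.mul_rpow hR.le h0]
  ring
end Chunk5
section Chunk6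
open MeasureTheory Set Filter
variable {s : ℝ}

lemma max_rpow_cont1 (hs : 0 < s) : Continuous (fun y : ℝ => (max y 0) ^ s) := by
  rw [continuous_iff_continuousAt]
  intro y
  exact ContinuousAt.rpow_const ((continuous_id.max continuous_const).continuousAt)
    (Or.inr hs.le)

lemma fermi_scale_tendsto (hs : 0 < s) {R v : ℕ → ℝ} {L : ℝ} (hL : L ≠ 0)
    (hR : Tendsto R atTop atTop) (hv : Tendsto v atTop (nhds L)) :
    Tendsto (fun k => fermi s (R k * v k) / R k ^ s) atTop
      (nhds ((max L 0) ^ s / Real.Gamma (s+1))) := by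
  rcases lt_or_gt_of_ne hL with hneg | hpos
  · have hmax : max L 0 = 0 := max_eq_right hneg.le
    rw [hmax, Real.zero_rpow (ne_of_gt hs), zero_div]
    have hx : Tendsto (fun k => R k * v k) atTop atBot :=
      hR.atTop_mul_neg hneg hv
    have hexp : Tendsto (fun k => Real.exp (R k * v k)) atTop (nhds 0) :=
      Real.tendsto_exp_atBot.comp hx
    apply squeeze_zero' ?_ ?_ hexp
    · filter_upwards [hR.eventually_ge_atTop 1] with k hk
      have hRk : (0:ℝ) < R k := lt_of_lt_of_le one_pos hk
      have h1 : (0:ℝ) < R k ^ s := Real.rpow_pos_of_pos hRk s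
      exact div_nonneg (fermi_nonneg hs _) h1.le
    · filter_upwards [hR.eventually_ge_atTop 1] with k hk
      have hRk : (0:ℝ) < R k := lt_of_lt_of_le one_pos hk
      have h1 : (1:ℝ) ≤ R k ^ s := Real.one_le_rpow hk hs.le
      calc fermi s (R k * v k) / R k ^ s ≤ fermi s (R k * v k) / 1 := by
            gcongr
            exact fermi_nonneg hs _
        _ = fermi s (R k * v k) := by ring
        _ ≤ Real.exp (R k * v k) := fermi_le_exp hs _
  · have hmax : max L 0 = L := max_eq_left hpos.le
    rw [hmax]
    have hx : Tendsto (fun k => R k * v k) atTop atTop :=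
      hR.atTop_mul_pos hpos hv
    have hratio : Tendsto (fun k => Real.Gamma (s+1) * fermi s (R k * v k) / (R k * v k) ^ s)
        atTop (nhds 1) := (fermi_ratio hs).comp hx
    have hvs : Tendsto (fun k => v k ^ s) atTop (nhds (L ^ s)) :=
      ((Real.continuousAt_rpow_const _ s (Or.inl hL)).tendsto).comp hv
    have hmul := (hratio.mul hvs).div_const (Real.Gamma (s+1))
    rw [one_mul] at hmul
    apply Tendsto.congr' _ hmul
    filter_upwards [hR.eventually_ge_atTop 1,
      hv.eventually (eventually_gt_nhds (half_lt_self hpos))] with k hk1 hk2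
    have hRk : (0:ℝ) < R k := lt_of_lt_of_le one_pos hk1
    have hvk : (0:ℝ) < v k := lt_trans (half_pos hpos) hk2
    have hxs : (R k * v k)^s = R k ^ s * v k ^ s := Real.mul_rpow hRk.le hvk.le
    have hG : (0:ℝ) < Real.Gamma (s+1) := Real.Gamma_pos_of_pos (by linarith)
    have hRs : (0:ℝ) < R k ^ s := Real.rpow_pos_of_pos hRk s
    have hvs' : (0:ℝ) < v k ^ s := Real.rpow_pos_of_pos hvk s
    rw [hxs]
    field_simp
end Chunk6
section Chunk7
open MeasureTheory Set Filter
variable {s : ℝ}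

lemma integral_D_scale2 (hs : 0 < s) (N : ℕ) {R A B : ℝ} (hR : 0 < R) (hb : 0 ≤ B/R)
    (hab : -(B/R) < A/R) :
    (∫ θ in (0:ℝ)..Cab A B, Real.cos (N*θ) * (A + B*Real.cos θ)^s)
    = R^s * ∫ θ in (0:ℝ)..Real.pi,
        Real.cos (N*θ) * (max (A/R + B/R*Real.cos θ) 0)^s := by
  have h1 : A = R * (A/R) := by field_simp
  have h2 : B = R * (B/R) := by field_simp
  calc (∫ θ in (0:ℝ)..Cab A B, Real.cos (N*θ) * (A + B*Real.cos θ)^s)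
      = ∫ θ in (0:ℝ)..Cab (R*(A/R)) (R*(B/R)),
          Real.cos (N*θ) * ((R*(A/R)) + (R*(B/R))*Real.cos θ)^s := by rw [← h1, ← h2]
    _ = R^s * ∫ θ in (0:ℝ)..Real.pi,
          Real.cos (N*θ) * (max (A/R + B/R*Real.cos θ) 0)^s :=
        integral_D_scale hs N hR hb hab




/-- Degenerate-limit asymptotics: if `R_k = √(A_k²+B_k²) → ∞` and
`(A_k/R_k, B_k/R_k) → (cos ψ, sin ψ)` with `ψ ∈ [0, 3π/4)` and `𝓕_N^s(ψ) ≠ 0`,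
then `𝓘_N^s(A_k,B_k) / D_k → 1`, where
`D_k = (1/(πΓ(s+1))) ∫₀^{C(A_k,B_k)} cos(Nθ)(A_k + B_k cos θ)^s dθ`. -/
theorem calI_asymptotic_degenerate (s : ℝ) (hs : 0 < s) (N : ℕ) (A B : ℕ → ℝ) (ψ : ℝ)
    (hB : ∀ k, 0 ≤ B k)
    (hR : Tendsto (fun k => Real.sqrt ((A k) ^ 2 + (B k) ^ 2)) atTop atTop)
    (hdir : Tendsto
      (fun k => (A k / Real.sqrt ((A k) ^ 2 + (B k) ^ 2),
                 B k / Real.sqrt ((A k) ^ 2 + (B k) ^ 2)))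
      atTop (nhds (Real.cos ψ, Real.sin ψ)))
    (hψ : ψ ∈ Set.Ico (0 : ℝ) (3 * Real.pi / 4))
    (hF : calF N s ψ ≠ 0) :
    Tendsto (fun k => calI N s (A k) (B k) /
      ((1 / (Real.pi * Real.Gamma (s + 1))) *
        ∫ θ in (0 : ℝ)..Cab (A k) (B k), Real.cos (N * θ) * (A k + B k * Real.cos θ) ^ s))
      atTop (nhds 1) := by
  obtain ⟨hψ0, hψ1⟩ := hψ
  have hπ := Real.pi_pos
  have hG : (0:ℝ) < Real.Gamma (s+1) := Real.Gamma_pos_of_pos (by linarith)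
  set R : ℕ → ℝ := fun k => Real.sqrt ((A k)^2 + (B k)^2) with hRdef
  have ha : Tendsto (fun k => A k / R k) atTop (nhds (Real.cos ψ)) :=
    (continuous_fst.tendsto _).comp hdir
  have hbb : Tendsto (fun k => B k / R k) atTop (nhds (Real.sin ψ)) :=
    (continuous_snd.tendsto _).comp hdir
  have hcs : 0 < Real.cos ψ + Real.sin ψ := cos_add_sin_pos hψ0 hψ1
  have hsn : 0 ≤ Real.sin ψ := Real.sin_nonneg_of_nonneg_of_le_pi hψ0 (by linarith)
  set M : ℝ := |Real.cos ψ| + |Real.sin ψ| + 2 with hMdef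
  have hM1 : (1:ℝ) ≤ M := by
    have := abs_nonneg (Real.cos ψ)
    have := abs_nonneg (Real.sin ψ)
    rw [hMdef]; linarith
  have hM0 : (0:ℝ) ≤ M := by linarith
  -- eventual bundle
  have hev : ∀ᶠ k in atTop, 1 ≤ R k ∧ 0 < A k / R k + B k / R k
      ∧ |A k / R k| ≤ M ∧ |B k / R k| ≤ M := by
    have h1 := hR.eventually_ge_atTop 1
    have h2 := (ha.add hbb).eventually (eventually_gt_nhds hcs)
    have h3 := ha.eventually (Metric.ball_mem_nhds (Real.cos ψ) one_pos)
    have h4 := hbb.eventually (Metric.ball_mem_nhds (Real.sin ψ) one_pos)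
    filter_upwards [h1, h2, h3, h4] with k hk1 hk2 hk3 hk4
    refine ⟨hk1, hk2, ?_, ?_⟩
    · have := abs_sub_abs_le_abs_sub (A k / R k) (Real.cos ψ)
      rw [Real.dist_eq] at hk3
      rw [hMdef]
      linarith [abs_nonneg (Real.sin ψ)]
    · have := abs_sub_abs_le_abs_sub (B k / R k) (Real.sin ψ)
      rw [Real.dist_eq] at hk4
      rw [hMdef]
      linarith [abs_nonneg (Real.cos ψ)]
  -- limit integrand
  set Flim : ℝ → ℝ :=
    fun θ => Real.cos (N*θ) * (max (Real.cos ψ + Real.sin ψ * Real.cos θ) 0)^s with hFlimdef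
  -- F_k convergence
  have hFlim : Tendsto
      (fun k => ∫ θ in (0:ℝ)..Real.pi,
        Real.cos (N*θ) * (max (A k / R k + B k / R k * Real.cos θ) 0)^s)
      atTop (nhds (∫ θ in (0:ℝ)..Real.pi, Flim θ)) := by
    apply intervalIntegral.tendsto_integral_filter_of_dominated_convergence
      (bound := fun _ => (2*M)^s)
    · filter_upwards with k
      exact (max_rpow_cont hs N _ _).aestronglyMeasurable
    · filter_upwards [hev] with k hk
      apply ae_of_all
      intro θ hθ
      obtain ⟨hk1, hk2, hk3, hk4⟩ := hk
      have hv : A k / R k + B k / R k * Real.cos θ ≤ 2*M := by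
        have hc1 : B k / R k * Real.cos θ ≤ |B k / R k| := by
          calc B k / R k * Real.cos θ ≤ |B k / R k * Real.cos θ| := le_abs_self _
            _ = |B k / R k| * |Real.cos θ| := abs_mul _ _
            _ ≤ |B k / R k| * 1 := by
                exact mul_le_mul_of_nonneg_left (Real.abs_cos_le_one θ) (abs_nonneg _)
            _ = |B k / R k| := by ring
        have hc2 : A k / R k ≤ |A k / R k| := le_abs_self _
        linarith
      have hmax : max (A k / R k + B k / R k * Real.cos θ) 0 ≤ 2*M :=
        max_le hv (by linarith)
      have hmaxnn : 0 ≤ max (A k / R k + B k / R k * Real.cos θ) 0 := le_max_right _ _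
      rw [Real.norm_eq_abs, abs_mul, abs_of_nonneg (Real.rpow_nonneg hmaxnn s)]
      calc |Real.cos (N*θ)| * (max (A k / R k + B k / R k * Real.cos θ) 0)^s
          ≤ 1 * (2*M)^s := by
            apply mul_le_mul (Real.abs_cos_le_one _)
              (Real.rpow_le_rpow hmaxnn hmax hs.le) (Real.rpow_nonneg hmaxnn s) one_pos.le
        _ = (2*M)^s := one_mul _
    · exact intervalIntegrable_const
    · apply ae_of_all
      intro θ hθ
      apply Tendsto.mul tendsto_const_nhds
      have hvt : Tendsto (fun k => A k / R k + B k / R k * Real.cos θ) atTop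
          (nhds (Real.cos ψ + Real.sin ψ * Real.cos θ)) :=
        ha.add (hbb.mul_const _)
      exact ((max_rpow_cont1 hs).continuousAt).tendsto.comp hvt
  have habL : -Real.sin ψ < Real.cos ψ := by linarith
  have hcalF : calF N s ψ = (1 / (Real.pi * Real.Gamma (s+1)))
      * ∫ θ in (0:ℝ)..Real.pi, Flim θ := by
    rw [calF, Cpsi_eq_Cab hψ0 hψ1, integral_Cab hs N hsn habL]
  -- h2 : D_k / R^s → calF
  have h2 : Tendsto (fun k => ((1 / (Real.pi * Real.Gamma (s + 1))) *
      ∫ θ in (0 : ℝ)..Cab (A k) (B k),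
        Real.cos (N * θ) * (A k + B k * Real.cos θ) ^ s) / R k ^ s)
      atTop (nhds (calF N s ψ)) := by
    have base : Tendsto (fun k => (1 / (Real.pi * Real.Gamma (s + 1))) *
        ∫ θ in (0:ℝ)..Real.pi,
          Real.cos (N*θ) * (max (A k / R k + B k / R k * Real.cos θ) 0)^s)
        atTop (nhds (calF N s ψ)) := by
      rw [hcalF]
      exact hFlim.const_mul _
    apply Tendsto.congr' _ base
    filter_upwards [hev] with k hk
    obtain ⟨hk1, hk2, _, _⟩ := hk
    have hRk : (0:ℝ) < R k := lt_of_lt_of_le one_pos hk1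
    have hRs : (0:ℝ) < R k ^ s := Real.rpow_pos_of_pos hRk s
    have hb0 : 0 ≤ B k / R k := div_nonneg (hB k) hRk.le
    have hab' : -(B k / R k) < A k / R k := by linarith
    rw [integral_D_scale2 hs N hRk hb0 hab']
    rw [mul_comm (R k ^ s), mul_div_assoc, mul_div_assoc, div_self (ne_of_gt hRs), mul_one]
  -- bad set null
  have hnull : volume {θ : ℝ | θ ∈ Set.Ioc 0 Real.pi
      ∧ Real.cos ψ + Real.sin ψ * Real.cos θ = 0} = 0 := by
    rcases eq_or_lt_of_le hsn with h0 | hpos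
    · have : {θ : ℝ | θ ∈ Set.Ioc 0 Real.pi
          ∧ Real.cos ψ + Real.sin ψ * Real.cos θ = 0} = ∅ := by
        ext θ
        simp only [Set.mem_setOf_eq, Set.mem_empty_iff_false, iff_false, not_and]
        intro _
        rw [← h0]
        intro hcontra
        rw [← h0] at hcs
        nlinarith
      rw [this]
      exact measure_empty
    · apply measure_mono_null
        (?_ : _ ⊆ ({Real.arccos (-(Real.cos ψ / Real.sin ψ))} : Set ℝ)) (measure_singleton _)
      rintro θ ⟨hθmem, hθeq⟩
      have hcosθ : Real.cos θ = -(Real.cos ψ / Real.sin ψ) := by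
        rw [← neg_div, eq_div_iff (ne_of_gt hpos)]
        linear_combination hθeq
      have h1 : θ = Real.arccos (Real.cos θ) :=
        (Real.arccos_cos hθmem.1.le hθmem.2).symm
      rw [Set.mem_singleton_iff, h1, hcosθ]
  have hae : ∀ᵐ θ : ℝ, ¬(θ ∈ Set.Ioc 0 Real.pi
      ∧ Real.cos ψ + Real.sin ψ * Real.cos θ = 0) := by
    exact measure_eq_zero_iff_ae_notMem.mp hnull
  -- h1 : calI / R^s → calF
  have h1 : Tendsto (fun k => calI N s (A k) (B k) / R k ^ s) atTop (nhds (calF N s ψ)) := by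
    have hGlim : Tendsto
        (fun k => ∫ θ in (0:ℝ)..Real.pi,
          Real.cos (N*θ) * fermi s (A k + B k * Real.cos θ) / R k ^ s)
        atTop (nhds (∫ θ in (0:ℝ)..Real.pi, Flim θ / Real.Gamma (s+1))) := by
      apply intervalIntegral.tendsto_integral_filter_of_dominated_convergence
        (bound := fun _ => (2*(2*M))^s / Real.Gamma (s+1) + 2^s)
      · filter_upwards with k
        apply Measurable.aestronglyMeasurable
        apply Measurable.div_const
        apply Measurable.mul
        · exact (Real.continuous_cos.comp (continuous_const.mul continuous_id)).measurable
        · exact ((fermi_mono hs).measurable).comp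
            (continuous_const.add (continuous_const.mul Real.continuous_cos)).measurable
      · filter_upwards [hev] with k hk
        apply ae_of_all
        intro θ hθ
        obtain ⟨hk1, hk2, hk3, hk4⟩ := hk
        have hRk : (0:ℝ) < R k := lt_of_lt_of_le one_pos hk1
        have hRs1 : (1:ℝ) ≤ R k ^ s := Real.one_le_rpow hk1 hs.le
        have hRs : (0:ℝ) < R k ^ s := by linarith
        have hxeq : A k + B k * Real.cos θ
            = R k * (A k / R k + B k / R k * Real.cos θ) := by
          field_simp
        set v : ℝ := A k / R k + B k / R k * Real.cos θ with hvdef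
        have hvM : max v 0 ≤ 2*M := by
          apply max_le _ (by linarith)
          have hc1 : B k / R k * Real.cos θ ≤ |B k / R k| := by
            calc B k / R k * Real.cos θ ≤ |B k / R k * Real.cos θ| := le_abs_self _
              _ = |B k / R k| * |Real.cos θ| := abs_mul _ _
              _ ≤ |B k / R k| * 1 :=
                  mul_le_mul_of_nonneg_left (Real.abs_cos_le_one θ) (abs_nonneg _)
              _ = |B k / R k| := by ring
          have hc2 : A k / R k ≤ |A k / R k| := le_abs_self _
          rw [hvdef]
          linarith
        have hmaxnn : (0:ℝ) ≤ max v 0 := le_max_right _ _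
        have hmaxmul : max (A k + B k * Real.cos θ) 0 = R k * max v 0 := by
          rw [hxeq]
          have := mul_max_of_nonneg v 0 hRk.le
          rw [mul_zero] at this
          exact this.symm
        have hgrow := fermi_growth hs (A k + B k * Real.cos θ)
        have hpow : (2 * max (A k + B k * Real.cos θ) 0)^s
            = R k ^ s * (2 * max v 0)^s := by
          rw [hmaxmul, show 2 * (R k * max v 0) = R k * (2 * max v 0) by ring,
            Real.mul_rpow hRk.le (by positivity)]
        have hbound1 : fermi s (A k + B k * Real.cos θ) / R k ^ s
            ≤ (2 * max v 0)^s / Real.Gamma (s+1) + 2^s := by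
          have h5 : fermi s (A k + B k * Real.cos θ)
              ≤ R k ^ s * (2 * max v 0)^s / Real.Gamma (s+1) + 2^s := by
            rw [← hpow]
            exact hgrow
          calc fermi s (A k + B k * Real.cos θ) / R k ^ s
              ≤ (R k ^ s * (2 * max v 0)^s / Real.Gamma (s+1) + 2^s) / R k ^ s := by
                gcongr
              _ = (2 * max v 0)^s / Real.Gamma (s+1) + 2^s / R k ^ s := by
                field_simp
              _ ≤ (2 * max v 0)^s / Real.Gamma (s+1) + 2^s := by
                have h2s : (0:ℝ) < (2:ℝ)^s := Real.rpow_pos_of_pos two_pos s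
                have : (2:ℝ)^s / R k ^ s ≤ 2^s / 1 := by gcongr
                simpa using this
        have hbound2 : (2 * max v 0)^s ≤ (2*(2*M))^s :=
          Real.rpow_le_rpow (by positivity) (by linarith) hs.le
        rw [Real.norm_eq_abs, abs_div, abs_mul, abs_of_pos hRs,
          abs_of_nonneg (fermi_nonneg hs _)]
        calc |Real.cos (N*θ)| * fermi s (A k + B k * Real.cos θ) / R k ^ s
            ≤ 1 * fermi s (A k + B k * Real.cos θ) / R k ^ s := by
              gcongr
              · exact fermi_nonneg hs _
              · exact Real.abs_cos_le_one _
          _ = fermi s (A k + B k * Real.cos θ) / R k ^ s := by ring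
          _ ≤ (2 * max v 0)^s / Real.Gamma (s+1) + 2^s := hbound1
          _ ≤ (2*(2*M))^s / Real.Gamma (s+1) + 2^s := by gcongr
      · exact intervalIntegrable_const
      · filter_upwards [hae] with θ hθn hθmem
        rw [Set.uIoc_of_le hπ.le] at hθmem
        have hv : Real.cos ψ + Real.sin ψ * Real.cos θ ≠ 0 := fun h => hθn ⟨hθmem, h⟩
        have hvt : Tendsto (fun k => A k / R k + B k / R k * Real.cos θ) atTop
            (nhds (Real.cos ψ + Real.sin ψ * Real.cos θ)) :=
          ha.add (hbb.mul_const _)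
        have hcore := fermi_scale_tendsto hs hv hR hvt
        have hmul := hcore.const_mul (Real.cos (N*θ))
        rw [hFlimdef]
        show Tendsto _ atTop (nhds (Real.cos (N*θ)
          * (max (Real.cos ψ + Real.sin ψ * Real.cos θ) 0)^s / Real.Gamma (s+1)))
        rw [mul_div_assoc]
        apply Tendsto.congr' _ hmul
        filter_upwards [hev] with k hk
        obtain ⟨hk1, _, _, _⟩ := hk
        have hRk : (0:ℝ) < R k := lt_of_lt_of_le one_pos hk1
        have hxeq : R k * (A k / R k + B k / R k * Real.cos θ)
            = A k + B k * Real.cos θ := by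
          field_simp
        rw [hxeq, mul_div_assoc]
    have hlimval : (1 / Real.pi) * ∫ θ in (0:ℝ)..Real.pi, Flim θ / Real.Gamma (s+1)
        = calF N s ψ := by
      rw [intervalIntegral.integral_div, hcalF]
      field_simp
    have base := hGlim.const_mul (1 / Real.pi)
    rw [hlimval] at base
    apply Tendsto.congr' _ base
    filter_upwards [hev] with k hk
    obtain ⟨hk1, _, _, _⟩ := hk
    have hRk : (0:ℝ) < R k := lt_of_lt_of_le one_pos hk1
    have hRs : (0:ℝ) < R k ^ s := Real.rpow_pos_of_pos hRk s
    rw [calI]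
    rw [intervalIntegral.integral_div]
    ring
  -- combine
  have hcomb := h1.div h2 hF
  rw [div_self hF] at hcomb
  apply Tendsto.congr' _ hcomb
  filter_upwards [hev] with k hk
  obtain ⟨hk1, _, _, _⟩ := hk
  have hRk : (0:ℝ) < R k := lt_of_lt_of_le one_pos hk1
  have hRs : R k ^ s ≠ 0 := ne_of_gt (Real.rpow_pos_of_pos hRk s)
  simp only [Pi.div_apply]
  rw [div_div_div_comm, div_self hRs, div_one]
end Chunk7
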